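/- arXiv:2311.16403 — 2 statements merged into one kernel-verified Lean document; each statement's English description precedes it below -/
import Mathlib

section
/- Let C ∈ M_{n-1} and let θ, γ be two graded 2-cocycles of p(C). Then θ and γ are proportional on every connected component G of Gr(C), i.e., θ_p γ_q = θ_q γ_p for all vertices p,q in the same connected component. -/
/-- Adjacency condition of the graph `Gr(C)`. -/
def adjRel {K : Type*} [Field K] (n : ℕ) (c : ℕ → ℕ → K) (p q : ℕ) : Prop :=
  p + q = n ∨ ∃ i j l, 1 ≤ i ∧ 1 ≤ j ∧ 1 ≤ l ∧ i + j + l = n ∧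
    p = i + j ∧ q = j + l ∧ c i j * c j l ≠ 0

/-- The undirected simple graph `Gr(C)` on the vertices `1,...,n-1`. -/
def grC {K : Type*} [Field K] (n : ℕ) (c : ℕ → ℕ → K) : SimpleGraph ℕ where
  Adj p q := p ≠ q ∧ (adjRel n c p q ∨ adjRel n c q p)
  symm := by constructor; intro p q h; exact ⟨h.1.symm, h.2.symm⟩
  loopless := by constructor; intro p h; exact h.1 rfl

lemma aux_step {K : Type*} [Field K] (n : ℕ) (hn : 2 ≤ n) (c : ℕ → ℕ → K)
    (t s : ℕ → K)
    (htsym : ∀ i, 1 ≤ i → i ≤ n - 1 → t i = t (n - i))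
    (htinv : ∀ i j l, 1 ≤ i → 1 ≤ j → 1 ≤ l → i + j + l = n →
      t (i + j) * c i j = t (j + l) * c j l)
    (hssym : ∀ i, 1 ≤ i → i ≤ n - 1 → s i = s (n - i))
    (hsinv : ∀ i j l, 1 ≤ i → 1 ≤ j → 1 ≤ l → i + j + l = n →
      s (i + j) * c i j = s (j + l) * c j l)
    {p b : ℕ} (hadj : (grC n c).Adj p b) (hp1 : 1 ≤ p) (hp2 : p ≤ n - 1) :
    1 ≤ b ∧ b ≤ n - 1 ∧ ∃ l : K, l ≠ 0 ∧ t p = l * t b ∧ s p = l * s b := by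
  obtain ⟨hne, hrel⟩ := hadj
  have hsum : ∀ (h : p + b = n), 1 ≤ b ∧ b ≤ n - 1 ∧
      ∃ l : K, l ≠ 0 ∧ t p = l * t b ∧ s p = l * s b := by
    intro h
    have hb : b = n - p := by omega
    refine ⟨by omega, by omega, 1, one_ne_zero, ?_, ?_⟩
    · rw [one_mul, hb]; exact htsym p hp1 hp2
    · rw [one_mul, hb]; exact hssym p hp1 hp2
  rcases hrel with h | h
  · rcases h with h | ⟨i, j, l, hi, hj, hl, hijl, hpe, hbe, hc⟩
    · exact hsum h
    · have hci : c i j ≠ 0 := fun h => hc (by rw [h, zero_mul])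
      have hcl : c j l ≠ 0 := fun h => hc (by rw [h, mul_zero])
      refine ⟨by omega, by omega, c j l * (c i j)⁻¹, by
        exact mul_ne_zero hcl (inv_ne_zero hci), ?_, ?_⟩
      · have := htinv i j l hi hj hl hijl
        rw [hpe, hbe]
        field_simp
        linear_combination this
      · have := hsinv i j l hi hj hl hijl
        rw [hpe, hbe]
        field_simp
        linear_combination this
  · rcases h with h | ⟨i, j, l, hi, hj, hl, hijl, hbe, hpe, hc⟩
    · exact hsum (by omega)
    · have hci : c i j ≠ 0 := fun h => hc (by rw [h, zero_mul])
      have hcl : c j l ≠ 0 := fun h => hc (by rw [h, mul_zero])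
      refine ⟨by omega, by omega, c i j * (c j l)⁻¹, by
        exact mul_ne_zero hci (inv_ne_zero hcl), ?_, ?_⟩
      · have := htinv i j l hi hj hl hijl
        rw [hpe, hbe]
        field_simp
        linear_combination -this
      · have := hsinv i j l hi hj hl hijl
        rw [hpe, hbe]
        field_simp
        linear_combination -this

lemma aux_walk {K : Type*} [Field K] (n : ℕ) (hn : 2 ≤ n) (c : ℕ → ℕ → K)
    (t s : ℕ → K)
    (htsym : ∀ i, 1 ≤ i → i ≤ n - 1 → t i = t (n - i))
    (htinv : ∀ i j l, 1 ≤ i → 1 ≤ j → 1 ≤ l → i + j + l = n →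
      t (i + j) * c i j = t (j + l) * c j l)
    (hssym : ∀ i, 1 ≤ i → i ≤ n - 1 → s i = s (n - i))
    (hsinv : ∀ i j l, 1 ≤ i → 1 ≤ j → 1 ≤ l → i + j + l = n →
      s (i + j) * c i j = s (j + l) * c j l)
    {p q : ℕ} (w : (grC n c).Walk p q) (hp1 : 1 ≤ p) (hp2 : p ≤ n - 1) :
    ∃ l : K, l ≠ 0 ∧ t p = l * t q ∧ s p = l * s q := by
  induction w with
  | nil => exact ⟨1, one_ne_zero, (one_mul _).symm, (one_mul _).symm⟩
  | cons hadj w ih =>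
    obtain ⟨hb1, hb2, l1, hl1, ht1, hs1⟩ :=
      aux_step n hn c t s htsym htinv hssym hsinv hadj hp1 hp2
    obtain ⟨l2, hl2, ht2, hs2⟩ := ih hb1 hb2
    exact ⟨l1 * l2, mul_ne_zero hl1 hl2,
      by rw [ht1, ht2, mul_assoc], by rw [hs1, hs2, mul_assoc]⟩

theorem stmt_14 {K : Type*} [Field K] (n : ℕ) (hn : 2 ≤ n) (c : ℕ → ℕ → K)
    (hsym : ∀ i j, c i j = c j i)
    (hassoc : ∀ i j l, 1 ≤ i → 1 ≤ j → 1 ≤ l →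
      c j l * c i (j + l) = c i j * c (i + j) l)
    (hzero : ∀ i j, i = 0 ∨ j = 0 ∨ n - 1 < i + j → c i j = 0)
    -- two graded 2-cocycles, given as tuples (t_i), (s_i)
    (t s : ℕ → K)
    (htsym : ∀ i, 1 ≤ i → i ≤ n - 1 → t i = t (n - i))
    (htinv : ∀ i j l, 1 ≤ i → 1 ≤ j → 1 ≤ l → i + j + l = n →
      t (i + j) * c i j = t (j + l) * c j l)
    (hssym : ∀ i, 1 ≤ i → i ≤ n - 1 → s i = s (n - i))
    (hsinv : ∀ i j l, 1 ≤ i → 1 ≤ j → 1 ≤ l → i + j + l = n →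
      s (i + j) * c i j = s (j + l) * c j l) :
    -- θ and γ are proportional on every connected component of Gr(C)
    ∀ p q, (grC n c).Reachable p q → 1 ≤ p → p ≤ n - 1 → 1 ≤ q → q ≤ n - 1 →
      t p * s q = t q * s p := by
  intro p q hreach hp1 hp2 hq1 hq2
  obtain ⟨w⟩ := hreach
  obtain ⟨l, hl, ht, hs⟩ := aux_walk n hn c t s htsym htinv hssym hsinv w hp1 hp2
  rw [ht, hs]; ring
end

section
/- Let C ∈ M_{n-1} and σ = (b_1,...,b_{n-1}) a graded algebra automorphism of p(C) (so b_i ∈ k* and b_{i+j} = b_i b_j whenever c_{ij} ≠ 0). If vertices p and q lie in the same connected component of Gr(C), then b_p b_{n-p} = b_q b_{n-q}. -/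
theorem stmt_15 {K : Type*} [Field K] (n : ℕ) (hn : 2 ≤ n) (c : ℕ → ℕ → K)
    (hsym : ∀ i j, c i j = c j i)
    (hassoc : ∀ i j l, 1 ≤ i → 1 ≤ j → 1 ≤ l →
      c j l * c i (j + l) = c i j * c (i + j) l)
    (hzero : ∀ i j, i = 0 ∨ j = 0 ∨ n - 1 < i + j → c i j = 0)
    -- a graded algebra automorphism σ = (b_1,...,b_{n-1}) of p(C)
    (b : ℕ → K) (hb : ∀ i, 1 ≤ i → i ≤ n - 1 → b i ≠ 0)
    (haut : ∀ i j, 1 ≤ i → 1 ≤ j → i + j ≤ n - 1 → c i j ≠ 0 →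
      b (i + j) = b i * b j) :
    -- then b_p b_{n-p} = b_q b_{n-q} for vertices in the same connected component
    ∀ p q, (grC n c).Reachable p q → 1 ≤ p → p ≤ n - 1 → 1 ≤ q → q ≤ n - 1 →
      b p * b (n - p) = b q * b (n - q) := by
  -- first, a single-edge lemma
  have key : ∀ p q, adjRel n c p q → 1 ≤ p → p ≤ n - 1 →
      1 ≤ q ∧ q ≤ n - 1 ∧ b p * b (n - p) = b q * b (n - q) := by
    intro p q hadj hp1 hp2
    rcases hadj with h | ⟨i, j, l, hi, hj, hl, hsum, hpe, hqe, hc⟩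
    · have hq : q = n - p := by omega
      have hp : n - q = p := by omega
      subst hq
      refine ⟨by omega, by omega, ?_⟩
      rw [show n - (n - p) = p by omega, mul_comm]
    · have hcij : c i j ≠ 0 := fun h => hc (by rw [h]; ring)
      have hcjl : c j l ≠ 0 := fun h => hc (by rw [h]; ring)
      have h1 : b (i + j) = b i * b j := haut i j hi hj (by omega) hcij
      have h2 : b (j + l) = b j * b l := haut j l hj hl (by omega) hcjl
      have hnp : n - p = l := by omega
      have hnq : n - q = i := by omega
      subst hpe; subst hqe
      refine ⟨by omega, by omega, ?_⟩
      rw [show n - (i + j) = l by omega, show n - (j + l) = i by omega, h1, h2]; ring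
  have edge : ∀ p q, (grC n c).Adj p q → 1 ≤ p → p ≤ n - 1 →
      1 ≤ q ∧ q ≤ n - 1 ∧ b p * b (n - p) = b q * b (n - q) := by
    intro p q ⟨_, h⟩ hp1 hp2
    rcases h with h | h
    · exact key p q h hp1 hp2
    · -- adjRel q p : deduce bounds on q first
      rcases h with h | ⟨i, j, l, hi, hj, hl, hsum, hqe, hpe, hc⟩
      · exact key p q (Or.inl (by omega)) hp1 hp2
      · have hq1 : 1 ≤ q := by omega
        have hq2 : q ≤ n - 1 := by omega
        obtain ⟨_, _, h⟩ := key q p (Or.inr ⟨i, j, l, hi, hj, hl, hsum, hqe, hpe, hc⟩) hq1 hq2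
        exact ⟨hq1, hq2, h.symm⟩
  intro p q hr hp1 hp2 hq1 hq2
  obtain ⟨w⟩ := hr
  induction w with
  | nil => rfl
  | cons h w ih =>
    obtain ⟨h1, h2, h3⟩ := edge _ _ h hp1 hp2
    exact h3.trans (ih h1 h2 hq1 hq2)
end
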